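/- The map (a, b) ↦ (k ↦ k(b - a) + a mod n) is a bijection from Z_n × Z_n onto the set of quandle endomorphisms of the dihedral quandle Z_n; equivalently, every quandle endomorphism of Z_n is an affine map k ↦ (mk + a) mod n for unique m, a ∈ Z_n. -/

import Mathlib

/-- Every quandle endomorphism of the dihedral quandle `ZMod n` (`n ≥ 3`) is an affine
map `k ↦ m k + a` for a unique pair `(m, a) ∈ ZMod n × ZMod n`, and conversely every
affine map is an endomorphism. -/
theorem dihedral_hom_affine_bijection (n : ℕ) (hn : 3 ≤ n) (φ : ZMod n → ZMod n) :
    (∀ x y : ZMod n, φ (2 * y - x) = 2 * φ y - φ x) ↔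
    (∃! ma : ZMod n × ZMod n, ∀ k : ZMod n, φ k = ma.1 * k + ma.2) := by
  haveI : NeZero n := ⟨by omega⟩
  constructor
  · intro h
    set a := φ 0 with ha
    set m := φ 1 - φ 0 with hm
    have key : ∀ k : ℕ, φ (k : ZMod n) = m * k + a ∧
        φ ((k + 1 : ℕ) : ZMod n) = m * ((k + 1 : ℕ) : ZMod n) + a := by
      intro k
      induction k with
      | zero => refine ⟨by simp [ha], by simp [hm, ha]⟩
      | succ k ih =>
        refine ⟨ih.2, ?_⟩
        have h2 : (2 * (((k + 1 : ℕ) : ZMod n)) - (k : ZMod n)) = ((k + 2 : ℕ) : ZMod n) := by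
          push_cast; ring
        have := h (k : ZMod n) ((k + 1 : ℕ) : ZMod n)
        rw [h2, ih.1, ih.2] at this
        rw [show ((k + 1 + 1 : ℕ) : ZMod n) = ((k + 2 : ℕ) : ZMod n) by push_cast; ring, this]
        push_cast; ring
    refine ⟨(m, a), ?_, ?_⟩
    · intro k
      obtain ⟨j, rfl⟩ := (ZMod.natCast_rightInverse (n := n)).surjective k
      exact (key j).1
    · rintro ⟨m', a'⟩ h'
      have h0 := h' 0
      have h1 := h' 1
      simp at h0 h1
      have key1 := (key 1).1
      simp at key1
      have haa : a' = a := by rw [← h0, ha]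
      have hmm : m' = m := by
        have : m' + a' = m + a := by rw [← h1, key1]
        rw [haa] at this; linear_combination this
      simp [haa, hmm]
  · rintro ⟨⟨m, a⟩, hma, -⟩ x y
    simp only at hma
    rw [hma, hma, hma]; ring
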